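/- Let (X,d) be a compact metric space containing at least two points and f : X → X a homeomorphism with the two-sided limit shadowing property. Then the topological entropy of f is positive. -/

import Mathlib

open Filter Topology

variable {X : Type*} [MetricSpace X]

/-- A two-sided limit pseudo-orbit: `d(f(x i), x (i+1)) → 0` as `|i| → ∞`. -/
def IsTwoSidedLimitPseudoOrbit (f : X ≃ X) (x : ℤ → X) : Prop :=
  Tendsto (fun i : ℤ => dist (f (x i)) (x (i + 1))) cofinite (𝓝 0)

/-- `f` has the two-sided limit shadowing property. -/
def TwoSidedLimitShadowing (f : X ≃ X) : Prop :=
  ∀ x : ℤ → X, IsTwoSidedLimitPseudoOrbit f x →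
    ∃ y : X, Tendsto (fun i : ℤ => dist ((f ^ i) y) (x i)) cofinite (𝓝 0)

namespace TSLS

/-- iterates indexed by ℤ -/
noncomputable def F (f : X ≃ₜ X) (i : ℤ) : X → X := ⇑(f.toEquiv ^ i)

lemma F_add (f : X ≃ₜ X) (i j : ℤ) (x : X) : F f (i + j) x = F f i (F f j x) := by
  simp [F, zpow_add, Equiv.Perm.mul_apply]

lemma F_zero (f : X ≃ₜ X) (x : X) : F f 0 x = x := rfl

lemma F_one (f : X ≃ₜ X) (x : X) : F f 1 x = f x := rfl

lemma f_F (f : X ≃ₜ X) (i : ℤ) (x : X) : f (F f i x) = F f (i + 1) x := by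
  rw [add_comm, F_add]; rfl

lemma F_nat (f : X ≃ₜ X) (n : ℕ) (x : X) : F f (n : ℤ) x = (⇑f)^[n] x := by
  induction n with
  | zero => rfl
  | succ n ih =>
      have h2 : ((n + 1 : ℕ) : ℤ) = ((n : ℤ) + 1) := by push_cast; ring
      rw [Function.iterate_succ_apply', ← ih, h2, ← f_F]

lemma F_continuous (f : X ≃ₜ X) (i : ℤ) : Continuous (F f i) := by
  induction i using Int.induction_on with
  | zero => exact continuous_id
  | succ n ih =>
      have : F f ((n : ℤ) + 1) = ⇑f ∘ F f n := by
        funext x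
        exact (f_F f n x).symm
      rw [this]; exact f.continuous.comp ih
  | pred n ih =>
      have : F f (-(n : ℤ) - 1) = ⇑f.symm ∘ F f (-n) := by
        funext x
        have := f_F f (-(n:ℤ) - 1) x
        simp only [sub_add_cancel] at this
        simp only [Function.comp_apply, ← this, Homeomorph.symm_apply_apply]
      rw [this]; exact f.symm.continuous.comp ih


/-- a δ-chain of length m from u to v -/
def ChainFrom (f : X → X) (δ : ℝ) (u v : X) (m : ℕ) : Prop :=
  ∃ c : ℕ → X, c 0 = u ∧ c m = v ∧ ∀ i < m, dist (f (c i)) (c (i + 1)) < δ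

lemma chainFrom_zero (f : X → X) (δ : ℝ) (u : X) : ChainFrom f δ u u 0 :=
  ⟨fun _ => u, rfl, rfl, fun i hi => absurd hi (Nat.not_lt_zero i)⟩

lemma chainFrom_single (f : X → X) {δ : ℝ} {u v : X} (h : dist (f u) v < δ) :
    ChainFrom f δ u v 1 := by
  refine ⟨fun i => if i = 0 then u else v, by simp, by simp, ?_⟩
  intro i hi
  interval_cases i
  simpa using h

lemma ChainFrom.trans {f : X → X} {δ : ℝ} {u v w : X} {m k : ℕ}
    (h1 : ChainFrom f δ u v m) (h2 : ChainFrom f δ v w k) :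
    ChainFrom f δ u w (m + k) := by
  obtain ⟨c, hc0, hcm, hc⟩ := h1
  obtain ⟨d, hd0, hdk, hd⟩ := h2
  refine ⟨fun i => if i ≤ m then c i else d (i - m), by simp [hc0], ?_, ?_⟩
  · rcases Nat.eq_zero_or_pos k with rfl | hk
    · simp [hcm, hdk ▸ hd0.symm]
    · have : ¬ m + k ≤ m := by omega
      simp only [this, if_false]
      rw [Nat.add_sub_cancel_left, hdk]
  · intro i hi
    by_cases h1i : i + 1 ≤ m
    · have : i ≤ m := by omega
      simp only [this, if_pos, h1i]
      exact hc i (by omega)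
    · have hi2 : ¬ i + 1 ≤ m := h1i
      by_cases him : i ≤ m
      · -- i = m
        have : i = m := by omega
        subst this
        simp only [him, if_pos, hi2, if_neg, if_false]
        rw [hcm, ← hd0]
        have : i + 1 - i = 1 := by omega
        rw [this]
        exact hd 0 (by omega)
      · simp only [him, hi2, if_false]
        have e1 : i + 1 - m = (i - m) + 1 := by omega
        rw [e1]
        exact hd (i - m) (by omega)

lemma ChainFrom.mul {f : X → X} {δ : ℝ} {x : X} {m : ℕ}
    (h : ChainFrom f δ x x m) : ∀ α : ℕ, ChainFrom f δ x x (α * m) := by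
  intro α
  induction α with
  | zero => simpa using chainFrom_zero f δ x
  | succ α ih =>
      have := ih.trans h
      simpa [Nat.succ_mul] using this

/-- numerical semigroup: any n ≥ m*m is a combination of m and m+1 -/
lemma exists_comb {m : ℕ} (hm : 1 ≤ m) {n : ℕ} (hn : m * m ≤ n) :
    ∃ α β : ℕ, n = α * m + β * (m + 1) := by
  refine ⟨n / m - n % m, n % m, ?_⟩
  have h1 : n % m < m := Nat.mod_lt n hm
  have h2 : m ≤ n / m := Nat.le_div_iff_mul_le (by omega) |>.2 (by nlinarith)
  have h3 : n = m * (n / m) + n % m := (Nat.div_add_mod n m).symm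
  have h4 : n % m ≤ n / m := by omega
  nlinarith [Nat.sub_add_cancel h4]

/-- From a cofinite-tendsto-zero function on ℤ, find large good indices. -/
lemma exists_ge_of_cofinite {g : ℤ → ℝ} (hg : Tendsto g cofinite (𝓝 0))
    {δ : ℝ} (hδ : 0 < δ) (L : ℕ) (s : Bool) :
    ∃ M : ℕ, L ≤ M ∧ g (if s then (M : ℤ) else -(M : ℤ)) < δ := by
  have hev : ∀ᶠ i in cofinite, g i < δ := by
    have := hg.eventually (eventually_lt_nhds hδ)
    exact this
  rw [eventually_cofinite] at hev
  set e : ℕ → ℤ := fun M => if s then (M : ℤ) else -(M : ℤ) with he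
  have hinj : Function.Injective e := by
    intro a b hab
    cases s <;> simp [he] at hab <;> omega
  have hfin : {M : ℕ | ¬ g (e M) < δ}.Finite := by
    have : {M : ℕ | ¬ g (e M) < δ} ⊆ e ⁻¹' {i | ¬ g i < δ} := fun M hM => hM
    exact (hev.preimage hinj.injOn).subset this
  have hinf : (Set.Ici L).Infinite := Set.Ici_infinite L
  obtain ⟨M, hM1, hM2⟩ := (hinf.diff hfin).nonempty
  exact ⟨M, hM1, not_not.mp hM2⟩


variable [CompactSpace X]

/-- forward reachability towards an omega-limit point -/
lemma reach_forward (f : X ≃ₜ X) (p : X) :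
    ∃ w : X, ∀ (j : ℤ) (δ : ℝ), 0 < δ → ∀ L : ℕ,
      ∃ m : ℕ, L + 1 ≤ m ∧ ChainFrom ⇑f δ p (F f j w) m := by
  obtain ⟨w, -, φ, hφ, hlim⟩ :=
    isCompact_univ.tendsto_subseq (x := fun k : ℕ => F f (k : ℤ) p) (fun k => Set.mem_univ _)
  refine ⟨w, fun j δ hδ L => ?_⟩
  have hcont : Tendsto (fun k => F f j (F f ((φ k : ℤ)) p)) atTop (𝓝 (F f j w)) :=
    ((F_continuous f j).tendsto w).comp hlim
  have hev : ∀ᶠ k in atTop, dist (F f j (F f ((φ k : ℤ)) p)) (F f j w) < δ :=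
    Metric.tendsto_nhds.mp hcont δ hδ
  have hφk : ∀ᶠ k in atTop, L + 1 + j.natAbs ≤ φ k :=
    (hφ.tendsto_atTop.eventually_ge_atTop (L + 1 + j.natAbs))
  obtain ⟨k, hk1, hk2⟩ := (hφk.and hev).exists
  set m : ℕ := ((φ k : ℤ) + j).toNat with hm
  have hmz : (m : ℤ) = (φ k : ℤ) + j := by
    rw [hm, Int.toNat_of_nonneg]
    have : (j.natAbs : ℤ) ≤ φ k := by exact_mod_cast le_trans (by omega) hk1
    omega
  have hmL : L + 1 ≤ m := by
    have : (j.natAbs : ℤ) + j ≥ 0 := by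
      rcases Int.natAbs_eq j with hh | hh <;> omega
    omega
  refine ⟨m, hmL, fun i => if i < m then F f (i : ℤ) p else F f j w, ?_, ?_, ?_⟩
  · simp only [if_pos (by omega : 0 < m)]; rfl
  · simp
  · intro i hi
    by_cases hi1 : i + 1 < m
    · simp only [if_pos hi, if_pos hi1, f_F]
      have e : ((i:ℤ)+1) = ((i+1:ℕ):ℤ) := by push_cast; ring
      rw [e, dist_self]
      exact hδ
    · have : i + 1 = m := by omega
      simp only [if_pos hi, if_neg (by omega : ¬ i + 1 < m)]
      rw [f_F]
      have e1 : ((i : ℤ) + 1) = (m : ℤ) := by exact_mod_cast congrArg (Nat.cast : ℕ → ℤ) this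
      rw [e1, hmz, add_comm ((φ k : ℤ)) j, F_add]
      exact hk2

/-- backward reachability from an alpha-limit point -/
lemma reach_backward (f : X ≃ₜ X) (p : X) :
    ∃ w : X, ∀ (j : ℤ) (δ : ℝ), 0 < δ → ∀ L : ℕ,
      ∃ m : ℕ, L + 1 ≤ m ∧ ChainFrom ⇑f δ (F f j w) p m := by
  obtain ⟨w, -, φ, hφ, hlim⟩ :=
    isCompact_univ.tendsto_subseq (x := fun k : ℕ => F f (-(k : ℤ)) p) (fun k => Set.mem_univ _)
  refine ⟨w, fun j δ hδ L => ?_⟩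
  have hcont : Tendsto (fun k => F f (j + 1) (F f (-(φ k : ℤ)) p)) atTop (𝓝 (F f (j + 1) w)) :=
    ((F_continuous f (j + 1)).tendsto w).comp hlim
  have hev : ∀ᶠ k in atTop, dist (F f (j + 1) (F f (-(φ k : ℤ)) p)) (F f (j + 1) w) < δ :=
    Metric.tendsto_nhds.mp hcont δ hδ
  have hφk : ∀ᶠ k in atTop, L + 1 + j.natAbs ≤ φ k :=
    (hφ.tendsto_atTop.eventually_ge_atTop (L + 1 + j.natAbs))
  obtain ⟨k, hk1, hk2⟩ := (hφk.and hev).exists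
  set m : ℕ := ((φ k : ℤ) - j).toNat with hm
  have hmz : (m : ℤ) = (φ k : ℤ) - j := by
    rw [hm, Int.toNat_of_nonneg]
    have : (j.natAbs : ℤ) ≤ φ k := by exact_mod_cast le_trans (by omega) hk1
    have := Int.natAbs_eq j
    omega
  have hmL : L + 1 ≤ m := by
    have : -(j.natAbs : ℤ) ≤ j := by rcases Int.natAbs_eq j with hh | hh <;> omega
    omega
  refine ⟨m, hmL,
    Function.update (fun i : ℕ => F f ((i : ℤ) + j - (φ k : ℤ)) p) 0 (F f j w),
    Function.update_self 0 _ _, ?_, ?_⟩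
  · have hmne : m ≠ 0 := by omega
    rw [Function.update_of_ne hmne]
    have e : (m : ℤ) + j - (φ k : ℤ) = 0 := by omega
    rw [e]
    rfl
  · intro i hi
    by_cases hi0 : i = 0
    · subst hi0
      rw [Function.update_self, Function.update_of_ne (by omega : (1:ℕ) ≠ 0)]
      have e1 : ((1 : ℕ) : ℤ) + j - (φ k : ℤ) = (j + 1) + (-(φ k : ℤ)) := by push_cast; ring
      have e2 : F f ((j + 1) + (-(φ k : ℤ))) p = F f (j + 1) (F f (-(φ k : ℤ)) p) :=
        F_add f (j + 1) (-(φ k : ℤ)) p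
      rw [e1, e2, f_F, dist_comm]
      exact hk2
    · rw [Function.update_of_ne hi0, Function.update_of_ne (by omega : i + 1 ≠ 0), f_F]
      have e1 : ((i : ℤ) + j - (φ k : ℤ)) + 1 = ((i + 1 : ℕ) : ℤ) + j - (φ k : ℤ) := by
        push_cast; ring
      rw [e1, dist_self]
      exact hδ

/-- the shadowing hypothesis applied to the glued pseudo-orbit of two full orbits -/
lemma glue_shadow (f : X ≃ₜ X) (h : TwoSidedLimitShadowing f.toEquiv) (p q : X) :
    ∃ y : X, Tendsto
      (fun i : ℤ => dist (F f i y) (if i < 0 then F f i p else F f i q)) cofinite (𝓝 0) := by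
  set x : ℤ → X := fun i => if i < 0 then F f i p else F f i q with hx
  have hpo : IsTwoSidedLimitPseudoOrbit f.toEquiv x := by
    have hfin : {i : ℤ | ¬ dist (f.toEquiv (x i)) (x (i + 1)) = 0}.Finite := by
      apply Set.Finite.subset (Set.finite_singleton (-1 : ℤ))
      intro i hi
      simp only [Set.mem_setOf_eq] at hi
      simp only [Set.mem_singleton_iff]
      by_contra hne
      apply hi
      have hfx : f.toEquiv (x i) = x (i + 1) := by
        by_cases h0 : i < 0
        · have h1 : i + 1 < 0 ∨ i = -1 := by omega
          rcases h1 with h1 | h1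
          · simp only [hx, if_pos h0, if_pos h1]
            exact f_F f i p
          · exact absurd h1 hne
        · have h1 : ¬ i + 1 < 0 := by omega
          simp only [hx, if_neg h0, if_neg h1]
          exact f_F f i q
      rw [hfx, dist_self]
    refine Tendsto.congr' ?_ tendsto_const_nhds
    rw [Filter.eventuallyEq_iff_exists_mem]
    exact ⟨_, hfin.compl_mem_cofinite, fun i hi => (not_not.mp hi).symm⟩
  exact h x hpo

/-- the shadowing hypothesis applied to the phase-slipped orbit of a point -/
lemma slip_shadow (f : X ≃ₜ X) (h : TwoSidedLimitShadowing f.toEquiv) (p : X) :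
    ∃ z : X, Tendsto
      (fun i : ℤ => dist (F f i z) (if i < 0 then F f i p else F f (i + 1) p))
      cofinite (𝓝 0) := by
  set x : ℤ → X := fun i => if i < 0 then F f i p else F f (i + 1) p with hx
  have hpo : IsTwoSidedLimitPseudoOrbit f.toEquiv x := by
    have hfin : {i : ℤ | ¬ dist (f.toEquiv (x i)) (x (i + 1)) = 0}.Finite := by
      apply Set.Finite.subset (Set.finite_singleton (-1 : ℤ))
      intro i hi
      simp only [Set.mem_setOf_eq] at hi
      simp only [Set.mem_singleton_iff]
      by_contra hne
      apply hi
      have hfx : f.toEquiv (x i) = x (i + 1) := by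
        by_cases h0 : i < 0
        · have h1 : i + 1 < 0 ∨ i = -1 := by omega
          rcases h1 with h1 | h1
          · simp only [hx, if_pos h0, if_pos h1]
            exact f_F f i p
          · exact absurd h1 hne
        · have h1 : ¬ i + 1 < 0 := by omega
          simp only [hx, if_neg h0, if_neg h1]
          exact f_F f (i + 1) p
      rw [hfx, dist_self]
    refine Tendsto.congr' ?_ tendsto_const_nhds
    rw [Filter.eventuallyEq_iff_exists_mem]
    exact ⟨_, hfin.compl_mem_cofinite, fun i hi => (not_not.mp hi).symm⟩
  exact h x hpo


lemma ChainFrom.congr_len {f : X → X} {δ : ℝ} {u v : X} {m k : ℕ}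
    (h : ChainFrom f δ u v m) (e : m = k) : ChainFrom f δ u v k := e ▸ h

/-- exact orbit segments are chains -/
lemma chain_orbit (f : X ≃ₜ X) {δ : ℝ} (hδ : 0 < δ) (x : X) (i : ℤ) (n : ℕ) :
    ChainFrom ⇑f δ (F f i x) (F f (i + n) x) n := by
  refine ⟨fun t => F f (i + t) x, by norm_num, rfl, ?_⟩
  intro t ht
  rw [f_F]
  have e : (i + (t : ℤ)) + 1 = i + ((t + 1 : ℕ) : ℤ) := by push_cast; ring
  rw [e, dist_self]
  exact hδ

/-- a chain through the middle of a shadowing orbit -/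
lemma chain_mid (f : X ≃ₜ X) {δ : ℝ} (y : X) {A B : X} {M K : ℕ} (hM : 1 ≤ M)
    (hA : dist (f A) (F f (-(M : ℤ)) y) < δ)
    (hB : dist (F f (K : ℤ) y) B < δ) :
    ChainFrom ⇑f δ A B (M + K + 1) := by
  refine ⟨fun i => if i = 0 then A else if i ≤ M + K then F f ((i : ℤ) - M - 1) y else B,
    by simp, ?_, ?_⟩
  · dsimp only
    rw [if_neg (by omega : ¬ M + K + 1 = 0), if_neg (by omega : ¬ M + K + 1 ≤ M + K)]
  · intro i hi
    dsimp only
    by_cases hi0 : i = 0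
    · subst hi0
      rw [if_pos rfl, if_neg (by omega : ¬ (1:ℕ) = 0), if_pos (by omega : 1 ≤ M + K)]
      have e : ((1 : ℕ) : ℤ) - M - 1 = -(M : ℤ) := by push_cast; ring
      rw [e]
      exact hA
    · by_cases hiK : i + 1 ≤ M + K
      · rw [if_neg hi0, if_pos (by omega : i ≤ M + K), if_neg (by omega : ¬ i + 1 = 0),
          if_pos hiK, f_F]
        have e : ((i : ℤ) - M - 1) + 1 = ((i + 1 : ℕ) : ℤ) - M - 1 := by push_cast; ring
        rw [e, dist_self]
        linarith [dist_nonneg (x := f A) (y := F f (-(M:ℤ)) y), hA]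
      · have hie : i = M + K := by omega
        subst hie
        rw [if_neg hi0, if_pos (le_refl _), if_neg (by omega : ¬ M + K + 1 = 0),
          if_neg (by omega : ¬ M + K + 1 ≤ M + K), f_F]
        have e : ((M + K : ℕ) : ℤ) - M - 1 + 1 = (K : ℤ) := by push_cast; ring
        rw [e]
        exact hB

/-- chain transitivity: any point chains to any other with any accuracy -/
lemma reach_any (f : X ≃ₜ X) (h : TwoSidedLimitShadowing f.toEquiv) (u v : X)
    {δ : ℝ} (hδ : 0 < δ) : ∃ m : ℕ, 1 ≤ m ∧ ChainFrom ⇑f δ u v m := by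
  obtain ⟨w, hw⟩ := reach_forward f u
  obtain ⟨w', hw'⟩ := reach_backward f v
  obtain ⟨y, hy⟩ := glue_shadow f h w w'
  obtain ⟨M, hM1, hM2⟩ := exists_ge_of_cofinite hy hδ 1 false
  obtain ⟨K, hK1, hK2⟩ := exists_ge_of_cofinite hy hδ 0 true
  simp only [if_false, if_true, Bool.false_eq_true] at hM2 hK2
  rw [if_pos (by omega : -(M:ℤ) < 0)] at hM2
  rw [if_neg (by omega : ¬ (K:ℤ) < 0)] at hK2
  obtain ⟨m1, hm1, hc1⟩ := hw (-(M : ℤ) - 1) δ hδ 0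
  obtain ⟨m3, hm3, hc3⟩ := hw' (K : ℤ) δ hδ 0
  have hc2 : ChainFrom ⇑f δ (F f (-(M : ℤ) - 1) w) (F f (K : ℤ) w') (M + K + 1) := by
    apply chain_mid f y hM1
    · rw [f_F]
      have e : -(M : ℤ) - 1 + 1 = -(M : ℤ) := by ring
      rw [e, dist_comm]
      exact hM2
    · exact hK2
  exact ⟨m1 + (M + K + 1) + m3, by omega, (hc1.trans hc2).trans hc3⟩

/-- consecutive-length chains between two points, from the phase-slipped orbit -/
lemma reach_pair (f : X ≃ₜ X) (h : TwoSidedLimitShadowing f.toEquiv) (p : X)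
    {δ : ℝ} (hδ : 0 < δ) :
    ∃ (A B : X) (ℓ : ℕ), 1 ≤ ℓ ∧ ChainFrom ⇑f δ A B ℓ ∧ ChainFrom ⇑f δ A B (ℓ + 1) := by
  obtain ⟨z, hz⟩ := slip_shadow f h p
  obtain ⟨M, hM1, hM2⟩ := exists_ge_of_cofinite hz hδ 1 false
  obtain ⟨K, hK1, hK2⟩ := exists_ge_of_cofinite hz hδ 0 true
  simp only [if_false, if_true, Bool.false_eq_true] at hM2 hK2
  rw [if_pos (by omega : -(M:ℤ) < 0)] at hM2
  rw [if_neg (by omega : ¬ (K:ℤ) < 0)] at hK2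
  refine ⟨F f (-(M : ℤ) - 1) p, F f ((K : ℤ) + 1) p, M + K + 1, by omega, ?_, ?_⟩
  · apply chain_mid f z hM1
    · rw [f_F]
      have e : -(M : ℤ) - 1 + 1 = -(M : ℤ) := by ring
      rw [e, dist_comm]
      exact hM2
    · exact hK2
  · have := chain_orbit f hδ p (-(M : ℤ) - 1) (M + K + 2)
    have e : (-(M : ℤ) - 1) + ((M + K + 2 : ℕ) : ℤ) = (K : ℤ) + 1 := by push_cast; ring
    rw [e] at this
    exact this.congr_len (by omega)

/-- chains of every sufficiently large exact length -/
lemma reach_exact (f : X ≃ₜ X) (h : TwoSidedLimitShadowing f.toEquiv) (u v : X)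
    {δ : ℝ} (hδ : 0 < δ) : ∃ N : ℕ, ∀ L ≥ N, ChainFrom ⇑f δ u v L := by
  obtain ⟨A, B, ℓ, hℓ, hC1, hC2⟩ := reach_pair f h u hδ
  obtain ⟨s, hs1, hs⟩ := reach_any f h u A hδ
  obtain ⟨r, hr1, hr⟩ := reach_any f h B A hδ
  obtain ⟨t, ht1, ht⟩ := reach_any f h B v hδ
  set m : ℕ := ℓ + r with hm
  have loop1 : ChainFrom ⇑f δ A A m := hC1.trans hr
  have loop2 : ChainFrom ⇑f δ A A (m + 1) := (hC2.trans hr).congr_len (by omega)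
  refine ⟨s + ℓ + t + m * m, fun L hL => ?_⟩
  obtain ⟨α, β, hαβ⟩ := exists_comb (by omega : 1 ≤ m) (by omega : m * m ≤ L - (s + ℓ + t))
  have hchain := ((hs.trans ((loop1.mul α).trans (loop2.mul β))).trans hC1).trans ht
  exact hchain.congr_len (by omega)

section P5
variable [CompactSpace X]

set_option maxHeartbeats 1000000 in
lemma finite_shadow (f : X ≃ₜ X) (h : TwoSidedLimitShadowing f.toEquiv) {ε : ℝ} (hε : 0 < ε) :
    ∃ δ : ℝ, 0 < δ ∧ ∀ (n : ℕ) (c : ℕ → X), (∀ i < n, dist (f (c i)) (c (i + 1)) < δ) →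
      ∃ y : X, ∀ i ≤ n, dist ((⇑f)^[i] y) (c i) ≤ ε := by
  by_contra hcon
  push_neg at hcon
  have H : ∀ k : ℕ, ∃ (n : ℕ) (c : ℕ → X),
      (∀ i < n, dist (f (c i)) (c (i + 1)) < 1 / (k + 1)) ∧
      ∀ y : X, ∃ i ≤ n, ε < dist ((⇑f)^[i] y) (c i) := fun k => by
    obtain ⟨n, c, h1, h2⟩ := hcon (1 / (k + 1)) (by positivity)
    exact ⟨n, c, h1, h2⟩
  choose m c hchain hbad using H
  have hm1 : ∀ k, 1 ≤ m k := by
    intro k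
    by_contra hk
    obtain ⟨i, hi, hd⟩ := hbad k (c k 0)
    have : i = 0 := by omega
    subst this
    simp at hd
    linarith
  have HB : ∀ k : ℕ, ∃ ρ : ℕ, 1 ≤ ρ ∧ ChainFrom ⇑f (1 / (k + 1)) (c k (m k)) (c (k + 1) 0) ρ :=
    fun k => reach_any f h _ _ (by positivity)
  choose r hr1 hrch using HB
  choose b hb0 hbr hbstep using hrch
  -- the segments
  set L : ℕ → ℕ := fun j => if j % 2 = 0 then m (j / 2) else r (j / 2) with hLdef
  set C : ℕ → ℕ → X := fun j => if j % 2 = 0 then c (j / 2) else b (j / 2) with hCdef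
  have hL1 : ∀ j, 1 ≤ L j := by
    intro j
    rw [hLdef]
    dsimp only
    split_ifs
    exacts [hm1 _, hr1 _]
  have hmatch : ∀ j, C j (L j) = C (j + 1) 0 := by
    intro j
    rcases Nat.even_or_odd j with ⟨k, hk⟩ | ⟨k, hk⟩
    · subst hk
      have e1 : (k + k) % 2 = 0 := by omega
      have e2 : (k + k + 1) % 2 ≠ 0 := by omega
      have e3 : (k + k) / 2 = k := by omega
      have e4 : (k + k + 1) / 2 = k := by omega
      rw [hLdef, hCdef]
      dsimp only
      rw [if_pos e1, if_pos e1, if_neg e2, e3, e4, hb0]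
    · subst hk
      have e1 : (2 * k + 1) % 2 ≠ 0 := by omega
      have e2 : (2 * k + 1 + 1) % 2 = 0 := by omega
      have e3 : (2 * k + 1) / 2 = k := by omega
      have e4 : (2 * k + 1 + 1) / 2 = k + 1 := by omega
      rw [hLdef, hCdef]
      dsimp only
      rw [if_neg e1, if_neg e1, if_pos e2, e3, e4, hbr]
  have hstep : ∀ j t, t < L j → dist (f (C j t)) (C j (t + 1)) < 1 / ((j / 2 : ℕ) + 1) := by
    intro j t ht
    rw [hCdef]
    dsimp only
    rw [hLdef] at ht
    dsimp only at ht
    split_ifs with hj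
    · rw [if_pos hj] at ht
      exact hchain (j / 2) t ht
    · rw [if_neg hj] at ht
      exact hbstep (j / 2) t ht
  -- cumulative starts
  set S : ℕ → ℕ := fun j => ∑ i ∈ Finset.range j, L i with hSdef
  have hS0 : S 0 = 0 := by simp [hSdef]
  have hSsucc : ∀ j, S (j + 1) = S j + L j := by
    intro j
    rw [hSdef]
    exact Finset.sum_range_succ L j
  have hSmon : Monotone S := by
    apply monotone_nat_of_le_succ
    intro j
    rw [hSsucc]
    omega
  have hjS : ∀ j, j ≤ S j := by
    intro j
    induction j with
    | zero => omega
    | succ j ih => rw [hSsucc]; have := hL1 j; omega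
  -- locating an index inside the segments
  set J : ℕ → ℕ := fun i => Nat.findGreatest (fun j => S j ≤ i) (i + 1) with hJdef
  have hJ1 : ∀ i, S (J i) ≤ i := by
    intro i
    have : S (Nat.findGreatest (fun j => S j ≤ i) (i + 1)) ≤ i :=
      Nat.findGreatest_spec (P := fun j => S j ≤ i) (m := 0) (by omega) (by simp [hS0])
    exact this
  have hJ2 : ∀ i, i < S (J i + 1) := by
    intro i
    by_contra hcon2
    push_neg at hcon2
    have h1 : J i + 1 ≤ i + 1 := by
      have := hjS (J i + 1)
      omega
    have h3 : J i + 1 ≤ J i :=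
      Nat.le_findGreatest (P := fun j => S j ≤ i) (n := i + 1) h1 hcon2
    omega
  have hJeq : ∀ j t, t < L j → J (S j + t) = j := by
    intro j t ht
    have hle : j ≤ J (S j + t) :=
      Nat.le_findGreatest (P := fun j' => S j' ≤ S j + t) (n := S j + t + 1)
        (by have := hjS j; omega) (by omega)
    have hge : J (S j + t) ≤ j := by
      by_contra hcon2
      push_neg at hcon2
      have : S (j + 1) ≤ S (J (S j + t)) := hSmon hcon2
      have h2 := hJ1 (S j + t)
      rw [hSsucc] at this
      omega
    omega
  have hJge : ∀ j i, S j ≤ i → j ≤ J i := by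
    intro j i hji
    exact Nat.le_findGreatest (P := fun j' => S j' ≤ i) (n := i + 1)
      (by have := hjS j; omega) hji
  -- the glued forward orbit
  set glob : ℕ → X := fun i => C (J i) (i - S (J i)) with hgdef
  have hglob : ∀ j t, t ≤ L j → glob (S j + t) = C j t := by
    intro j t ht
    rcases lt_or_eq_of_le ht with ht | ht
    · rw [hgdef]
      dsimp only
      rw [hJeq j t ht, Nat.add_sub_cancel_left]
    · subst ht
      have h3 : glob (S (j + 1) + 0) = C (j + 1) 0 := by
        rw [hgdef]
        dsimp only
        rw [hJeq (j + 1) 0 (by have := hL1 (j + 1); omega), Nat.add_sub_cancel_left]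
      rw [← hSsucc j, hmatch j, ← Nat.add_zero (S (j + 1))]
      exact h3
  have hgstep : ∀ i : ℕ, dist (f (glob i)) (glob (i + 1)) < 1 / (((J i) / 2 : ℕ) + 1) := by
    intro i
    obtain ⟨t, h2, h1⟩ : ∃ t, t < L (J i) ∧ i = S (J i) + t := by
      refine ⟨i - S (J i), ?_, ?_⟩
      · have h5 := hJ2 i
        rw [hSsucc] at h5
        have h6 := hJ1 i
        omega
      · have h6 := hJ1 i
        omega
    have e1 : glob i = C (J i) t := by
      conv_lhs => rw [h1]
      exact hglob _ _ h2.le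
    have e2 : glob (i + 1) = C (J i) (t + 1) := by
      have h7 : i + 1 = S (J i) + (t + 1) := by omega
      conv_lhs => rw [h7]
      exact hglob _ _ h2
    rw [e1, e2]
    exact hstep (J i) t h2
  -- the two-sided limit pseudo-orbit
  set x : ℤ → X := fun i => if i < 0 then F f i (glob 0) else glob i.toNat with hxdef
  have hpo : IsTwoSidedLimitPseudoOrbit f.toEquiv x := by
    rw [IsTwoSidedLimitPseudoOrbit, Int.cofinite_eq, tendsto_sup]
    constructor
    · -- backward: exact orbit
      have hev : ∀ᶠ i : ℤ in atBot, dist (f.toEquiv (x i)) (x (i + 1)) = 0 := by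
        rw [eventually_atBot]
        refine ⟨-1, fun i hi => ?_⟩
        have hfx : f.toEquiv (x i) = x (i + 1) := by
          have hi0 : i < 0 := by omega
          rw [hxdef]
          dsimp only
          rw [if_pos hi0]
          by_cases hi1 : i + 1 < 0
          · rw [if_pos hi1]
            exact f_F f i (glob 0)
          · have : i = -1 := by omega
            subst this
            norm_num
            have := f_F f (-1) (glob 0)
            norm_num at this
            rw [this]
            exact F_zero f (glob 0)
        rw [hfx, dist_self]
      exact Tendsto.congr' (hev.mono fun i hi => hi.symm) tendsto_const_nhds
    · -- forward
      rw [Metric.tendsto_nhds]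
      intro ε' hε'
      obtain ⟨n0, hn0⟩ := exists_nat_one_div_lt hε'
      rw [eventually_atTop]
      refine ⟨(S (2 * n0) : ℤ), fun i hi => ?_⟩
      have hi0 : 0 ≤ i := le_trans (by positivity) hi
      set t : ℕ := i.toNat with htdef
      have hti : (t : ℤ) = i := Int.toNat_of_nonneg hi0
      have hts : S (2 * n0) ≤ t := by omega
      have e1 : x i = glob t := by
        rw [hxdef]
        dsimp only
        rw [if_neg (by omega)]
      have e2 : x (i + 1) = glob (t + 1) := by
        rw [hxdef]
        dsimp only
        rw [if_neg (by omega)]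
        congr 1
        omega
      have hcoe : f.toEquiv (x i) = f (x i) := rfl
      rw [hcoe, e1, e2, Real.dist_eq, sub_zero, abs_of_nonneg dist_nonneg]
      have hJt : 2 * n0 ≤ J t := hJge _ _ hts
      calc dist (f (glob t)) (glob (t + 1)) < 1 / ((J t / 2 : ℕ) + 1) := hgstep t
        _ ≤ 1 / ((n0 : ℝ) + 1) := by
            apply one_div_le_one_div_of_le (by positivity)
            have h8 : n0 ≤ (J t) / 2 := by omega
            exact_mod_cast Nat.add_le_add_right h8 1
        _ < ε' := hn0
  obtain ⟨y, hy⟩ := h x hpo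
  have hyt : Tendsto (fun i : ℤ => dist (F f i y) (x i)) atTop (𝓝 0) := by
    rw [Int.cofinite_eq] at hy
    exact hy.mono_left le_sup_right
  rw [Metric.tendsto_nhds] at hyt
  obtain ⟨N0, hN0⟩ := eventually_atTop.mp (hyt ε hε)
  set n : ℕ := N0.toNat with hndef
  have hSn : N0 ≤ (S (2 * n) : ℤ) := by
    have h1 : 2 * n ≤ S (2 * n) := hjS _
    have : (n : ℤ) ≤ S (2 * n) := by exact_mod_cast le_trans (by omega) h1
    omega
  set y' : X := F f (S (2 * n) : ℤ) y with hy'def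
  obtain ⟨i, him, hgt⟩ := hbad n y'
  have hlt : dist ((⇑f)^[i] y') (c n i) < ε := by
    have e1 : (⇑f)^[i] y' = F f ((S (2 * n) : ℤ) + i) y := by
      rw [← F_nat, hy'def, ← F_add, add_comm ((i : ℤ)) _]
    have e2 : x ((S (2 * n) : ℤ) + i) = c n i := by
      rw [hxdef]
      dsimp only
      rw [if_neg (by omega)]
      have e3 : ((S (2 * n) : ℤ) + i).toNat = S (2 * n) + i := by omega
      rw [e3]
      have e4 : L (2 * n) = m n := by
        rw [hLdef]
        dsimp only
        rw [if_pos (by omega), Nat.mul_div_cancel_left n (by omega)]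
      have e5 : C (2 * n) i = c n i := by
        rw [hCdef]
        dsimp only
        rw [if_pos (by omega), Nat.mul_div_cancel_left n (by omega)]
      rw [hglob (2 * n) i (by omega), e5]
    have := hN0 ((S (2 * n) : ℤ) + i) (by omega)
    rw [Real.dist_eq, sub_zero, abs_of_nonneg dist_nonneg] at this
    rw [e1, ← e2]
    exact this
  linarith

end P5

section P6
variable [CompactSpace X]

lemma word_chain (f : X ≃ₜ X) {δ : ℝ} {T : ℕ} (hT1 : 1 ≤ T) {pt : Bool → X}
    (hT : ∀ s t : Bool, ChainFrom ⇑f δ (pt s) (pt t) T) :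
    ∀ (n : ℕ) (w : ℕ → Bool), ∃ c : ℕ → X,
      (∀ i < n * T, dist (f (c i)) (c (i + 1)) < δ) ∧ ∀ j ≤ n, c (j * T) = pt (w j) := by
  intro n w
  induction n with
  | zero =>
      refine ⟨fun _ => pt (w 0), fun i hi => absurd hi (by omega), fun j hj => ?_⟩
      have : j = 0 := by omega
      subst this
      rfl
  | succ n ih =>
      obtain ⟨c, hc, hcm⟩ := ih
      obtain ⟨d, hd0, hdT, hd⟩ := hT (w n) (w (n + 1))
      have hmul : (n + 1) * T = n * T + T := Nat.succ_mul n T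
      refine ⟨fun i => if i ≤ n * T then c i else d (i - n * T), ?_, ?_⟩
      · intro i hi
        dsimp only
        by_cases h1 : i + 1 ≤ n * T
        · rw [if_pos (by omega), if_pos h1]
          exact hc i (by omega)
        · by_cases h2 : i ≤ n * T
          · have hieq : i = n * T := by omega
            subst hieq
            rw [if_pos le_rfl, if_neg (by omega), hcm n le_rfl, ← hd0]
            have e : n * T + 1 - n * T = 0 + 1 := by omega
            rw [e]
            exact hd 0 (by omega)
          · rw [if_neg h2, if_neg (by omega)]
            have e : i + 1 - n * T = (i - n * T) + 1 := by omega
            rw [e]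
            exact hd (i - n * T) (by omega)
      · intro j hj
        dsimp only
        by_cases hjn : j ≤ n
        · rw [if_pos (Nat.mul_le_mul_right T hjn)]
          exact hcm j hjn
        · have hje : j = n + 1 := by omega
          subst hje
          rw [if_neg (by omega)]
          have e : (n + 1) * T - n * T = T := by omega
          rw [e]
          exact hdT

end P6

section P7
variable [CompactSpace X]

open Dynamics in
set_option maxHeartbeats 1000000 in
lemma net_bound (f : X ≃ₜ X) (h : TwoSidedLimitShadowing f.toEquiv)
    {a b : X} (hab : a ≠ b) :
    ∃ (ε : ℝ) (T : ℕ), 0 < ε ∧ 1 ≤ T ∧ ∀ n : ℕ,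
      ((2 ^ (n + 1) : ℕ) : ℕ∞) ≤
        netMaxcard ⇑f Set.univ {p : X × X | dist p.1 p.2 < ε / 2} (n * T + 1) := by
  classical
  have hd : 0 < dist a b := dist_pos.2 hab
  set ε : ℝ := dist a b / 3 with hεdef
  have hε : 0 < ε := by positivity
  obtain ⟨δ, hδ, hshadow⟩ := finite_shadow f h hε
  set pt : Bool → X := fun s => cond s a b with hpt
  have h3ε : dist a b = 3 * ε := by rw [hεdef]; ring
  have hptd : ∀ s t : Bool, s ≠ t → dist (pt s) (pt t) = 3 * ε := by
    intro s t hst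
    cases s <;> cases t
    · exact absurd rfl hst
    · show dist b a = 3 * ε
      rw [dist_comm]
      exact h3ε
    · exact h3ε
    · exact absurd rfl hst
  have hpair : ∀ s t : Bool, ∃ N, ∀ L ≥ N, ChainFrom ⇑f δ (pt s) (pt t) L :=
    fun s t => reach_exact f h _ _ hδ
  choose Nf hNf using hpair
  set T : ℕ := Nf true true + Nf true false + Nf false true + Nf false false + 1 with hTdef
  have hT1 : 1 ≤ T := by omega
  have hT : ∀ s t : Bool, ChainFrom ⇑f δ (pt s) (pt t) T :=
    fun s t => hNf s t T (by cases s <;> cases t <;> omega)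
  refine ⟨ε, T, hε, hT1, fun n => ?_⟩
  have hw : ∀ w : ℕ → Bool, ∃ y : X, ∀ j ≤ n, dist ((⇑f)^[j * T] y) (pt (w j)) ≤ ε := by
    intro w
    obtain ⟨c, hc, hcm⟩ := word_chain f hT1 hT n w
    obtain ⟨y, hy⟩ := hshadow (n * T) c hc
    exact ⟨y, fun j hj => by
      rw [← hcm j hj]
      exact hy (j * T) (Nat.mul_le_mul_right T hj)⟩
  choose Y hY using hw
  have hsep : ∀ (w w' : ℕ → Bool) (j : ℕ), j ≤ n → w j ≠ w' j →
      ε ≤ dist ((⇑f)^[j * T] (Y w)) ((⇑f)^[j * T] (Y w')) := by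
    intro w w' j hj hne
    have h1 := hY w j hj
    have h2 := hY w' j hj
    have h3 := hptd (w j) (w' j) hne
    have h4 := dist_triangle4 (pt (w j)) ((⇑f)^[j * T] (Y w)) ((⇑f)^[j * T] (Y w'))
      (pt (w' j))
    have h5 : dist (pt (w j)) ((⇑f)^[j * T] (Y w)) ≤ ε := by
      rw [dist_comm]; exact h1
    linarith
  set W : (Fin (n + 1) → Bool) → (ℕ → Bool) :=
    fun v j => if hj : j < n + 1 then v ⟨j, hj⟩ else false with hW
  have hWd : ∀ v v' : Fin (n + 1) → Bool, v ≠ v' → ∃ j ≤ n, W v j ≠ W v' j := by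
    intro v v' hvv
    obtain ⟨jf, hjf⟩ := Function.ne_iff.mp hvv
    have hlt := jf.isLt
    refine ⟨jf, by omega, ?_⟩
    rw [hW]
    dsimp only
    rw [dif_pos jf.isLt, dif_pos jf.isLt]
    simpa [Fin.eta] using hjf
  have hYinj : Function.Injective (fun v : Fin (n + 1) → Bool => Y (W v)) := by
    intro v v' he
    by_contra hvv
    obtain ⟨j, hj, hne⟩ := hWd v v' hvv
    have hcontra := hsep (W v) (W v') j hj hne
    dsimp only at he
    rw [he, dist_self] at hcontra
    linarith
  set s : Finset X := Finset.image (fun v => Y (W v)) Finset.univ with hs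
  have hUsymm : SetRel.IsSymm {p : X × X | dist p.1 p.2 < ε / 2} := by
    rw [← SetRel.inv_eq_self_iff]
    ext ⟨u, v⟩
    simp [dist_comm]
  have hnet : IsDynNetIn ⇑f Set.univ {p : X × X | dist p.1 p.2 < ε / 2} (n * T + 1) ↑s := by
    refine ⟨Set.subset_univ _, ?_⟩
    intro x hx x' hx' hne
    simp only [hs, Finset.coe_image, Finset.coe_univ, Set.image_univ, Set.mem_range]
      at hx hx'
    obtain ⟨v, rfl⟩ := hx
    obtain ⟨v', rfl⟩ := hx'
    have hvv : v ≠ v' := fun hc => hne (by rw [hc])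
    rw [Function.onFun]
    by_contra hnd
    rw [Set.not_disjoint_iff_nonempty_inter] at hnd
    have key := mem_ball_dynEntourage_comp ⇑f (n * T + 1) (Y (W v)) (Y (W v')) hnd
    rw [UniformSpace.ball, Set.mem_preimage] at key
    obtain ⟨j, hj, hwne⟩ := hWd v v' hvv
    have hjT : j * T < n * T + 1 := by
      have := Nat.mul_le_mul_right T hj
      omega
    have hk := mem_dynEntourage.mp key (j * T) hjT
    obtain ⟨z, hz1, hz2⟩ := hk
    simp only [Set.mem_setOf_eq] at hz1 hz2
    have hd2 : dist ((⇑f)^[j * T] (Y (W v))) ((⇑f)^[j * T] (Y (W v'))) < ε := by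
      have htri := dist_triangle ((⇑f)^[j * T] (Y (W v'))) z ((⇑f)^[j * T] (Y (W v)))
      rw [dist_comm]
      linarith
    have hcontra := hsep (W v) (W v') j hj hwne
    linarith
  have hcard : ((2 ^ (n + 1) : ℕ) : ℕ∞) = (s.card : ℕ∞) := by
    rw [hs, Finset.card_image_of_injective _ hYinj, Finset.card_univ]
    simp
  rw [hcard]
  exact hnet.card_le_netMaxcard

end P7
end TSLS

open scoped Uniformity ENNReal in
set_option maxHeartbeats 1000000 in
/-- A homeomorphism of a compact metric space with at least two points which has the
two-sided limit shadowing property has positive topological entropy. -/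
theorem stmt8 [CompactSpace X] (f : X ≃ₜ X) (hX : ∃ a b : X, a ≠ b)
    (h : TwoSidedLimitShadowing f.toEquiv) :
    0 < Dynamics.coverEntropy ⇑f Set.univ := by
  classical
  obtain ⟨a, b, hab⟩ := hX
  obtain ⟨ε, T, hε, hT1, hbound⟩ := TSLS.net_bound f h hab
  set U : Set (X × X) := {p : X × X | dist p.1 p.2 < ε / 2} with hUdef
  have hUuni : U ∈ 𝓤 X := Metric.dist_mem_uniformity (by positivity)
  have hTpos : (0 : ℝ) < (T : ℝ) := by exact_mod_cast hT1
  have hkey : ∀ n : ℕ, ((Real.log 2 / T : ℝ) : EReal) ≤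
      ENNReal.log (Dynamics.netMaxcard ⇑f Set.univ U (n * T + 1)) /
        ((n * T + 1 : ℕ) : EReal) := by
    intro n
    have h1 : ((2 : ℝ≥0∞) ^ (n + 1)) ≤
        ((Dynamics.netMaxcard ⇑f Set.univ U (n * T + 1) : ℕ∞) : ℝ≥0∞) := by
      calc (2 : ℝ≥0∞) ^ (n + 1) = (((2 ^ (n + 1) : ℕ) : ℕ∞) : ℝ≥0∞) := by
            rw [ENat.toENNReal_coe]
            push_cast
            rfl
        _ ≤ _ := ENat.toENNReal_le.2 (hbound n)
    have h2 : (((n + 1 : ℕ) : EReal)) * ENNReal.log 2 ≤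
        ENNReal.log (Dynamics.netMaxcard ⇑f Set.univ U (n * T + 1)) := by
      rw [← ENNReal.log_pow]
      exact ENNReal.log_monotone h1
    have hlog2 : ENNReal.log 2 = ((Real.log 2 : ℝ) : EReal) := by
      rw [ENNReal.log_pos_real (by norm_num) (by norm_num)]
      norm_num
    have h2' : ((((n + 1 : ℕ) : ℝ) * Real.log 2 : ℝ) : EReal) ≤
        ENNReal.log (Dynamics.netMaxcard ⇑f Set.univ U (n * T + 1)) := by
      rw [EReal.coe_mul, EReal.coe_coe_eq_natCast]
      rw [hlog2] at h2
      exact h2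
    calc ((Real.log 2 / T : ℝ) : EReal)
        ≤ ((((n + 1 : ℕ) : ℝ) * Real.log 2 / ((n * T + 1 : ℕ) : ℝ) : ℝ) : EReal) := by
          rw [EReal.coe_le_coe_iff, div_le_div_iff₀ hTpos (by positivity)]
          have hl2 : 0 ≤ Real.log 2 := Real.log_nonneg one_le_two
          have hc : ((n * T + 1 : ℕ) : ℝ) ≤ ((n + 1 : ℕ) : ℝ) * T := by
            have hnat : n * T + 1 ≤ (n + 1) * T := by
              rw [Nat.add_mul]
              omega
            calc ((n * T + 1 : ℕ) : ℝ) ≤ (((n + 1) * T : ℕ) : ℝ) := Nat.cast_le.2 hnat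
              _ = ((n + 1 : ℕ) : ℝ) * T := by push_cast; ring
          nlinarith
      _ = ((((n + 1 : ℕ) : ℝ) * Real.log 2 : ℝ) : EReal) / ((n * T + 1 : ℕ) : EReal) := by
          rw [EReal.coe_div, EReal.coe_coe_eq_natCast]
      _ ≤ _ := EReal.div_le_div_right_of_nonneg
          (by exact_mod_cast Nat.zero_le (n * T + 1)) h2'
  have hfreq : ∃ᶠ N in Filter.atTop, ((Real.log 2 / T : ℝ) : EReal) ≤
      ENNReal.log (Dynamics.netMaxcard ⇑f Set.univ U N) / (N : EReal) := by
    rw [Filter.frequently_atTop]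
    intro N0
    have hge : N0 ≤ N0 * T := Nat.le_mul_of_pos_right N0 (by omega)
    exact ⟨N0 * T + 1, by omega, hkey N0⟩
  have hlim : ((Real.log 2 / T : ℝ) : EReal) ≤ Dynamics.netEntropyEntourage ⇑f Set.univ U :=
    Filter.le_limsup_of_frequently_le' hfreq
  have hsup : Dynamics.netEntropyEntourage ⇑f Set.univ U ≤
      Dynamics.coverEntropy ⇑f Set.univ := by
    rw [Dynamics.coverEntropy_eq_iSup_netEntropyEntourage]
    exact le_iSup₂ (f := fun (V : Set (X × X)) (_ : V ∈ 𝓤 X) =>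
      Dynamics.netEntropyEntourage ⇑f Set.univ V) U hUuni
  have hpos : (0 : EReal) < ((Real.log 2 / T : ℝ) : EReal) :=
    EReal.coe_pos.2 (div_pos (Real.log_pos one_lt_two) hTpos)
  exact lt_of_lt_of_le hpos (hlim.trans hsup)
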